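/- Let H be a bialgebra over a field k with coproduct Δ, counit ε, and unit η. If x ∈ H is a product of n primitive elements (n ≥ 0, with the empty product being 1), then for every m > n one has ((id_H − η∘ε)^{⊗m} ∘ Δ^{(m)})(x) = 0, where Δ^{(m)} : H → H^{⊗m} is the (m−1)-fold iterated coproduct. -/

import Mathlib

open TensorProduct

section Defs
variable (k H : Type*) [Field k] [Ring H] [Bialgebra k H]

/-- `Tp n` is the `(n+1)`-fold tensor power `H ⊗ (H ⊗ (⋯ ⊗ H))`. -/
noncomputable def Tp : ℕ → ModuleCat k
  | 0 => ModuleCat.of k H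
  | n + 1 => ModuleCat.of k (H ⊗[k] (Tp n))

/-- `Δ ⊗ id^{⊗ n} : H^{⊗(n+1)} → H^{⊗(n+2)}`, the coproduct applied to the first factor. -/
noncomputable def copFirst : (n : ℕ) → (Tp k H n →ₗ[k] Tp k H (n + 1))
  | 0 => (Coalgebra.comul : H →ₗ[k] H ⊗[k] H)
  | n + 1 =>
      (TensorProduct.assoc k H H (Tp k H n)).toLinearMap ∘ₗ
        TensorProduct.map (Coalgebra.comul : H →ₗ[k] H ⊗[k] H) LinearMap.id

/-- the iterated coproduct `Δ^{(n+1)} : H → H^{⊗(n+1)}`, with `Δ^{(1)} = id` and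
`Δ^{(m)} = (Δ ⊗ id^{⊗(m−2)}) ∘ Δ^{(m−1)}`. -/
noncomputable def itCop : (n : ℕ) → (ModuleCat.of k H →ₗ[k] Tp k H n)
  | 0 => LinearMap.id
  | n + 1 => copFirst k H n ∘ₗ itCop n

/-- the factorwise map `f^{⊗(n+1)} : H^{⊗(n+1)} → H^{⊗(n+1)}` for `f : H → H`. -/
noncomputable def itMap (f : H →ₗ[k] H) : (n : ℕ) → (Tp k H n →ₗ[k] Tp k H n)
  | 0 => f
  | n + 1 => TensorProduct.map f (itMap f n)

/-- primitive elements: `Δ(x) = x ⊗ 1 + 1 ⊗ x` -/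
noncomputable def IsPrim (x : H) : Prop :=
  (Coalgebra.comul (R := k) x) = x ⊗ₜ[k] (1 : H) + (1 : H) ⊗ₜ[k] x

/-- `id_H − η∘ε : H → H` -/
noncomputable def idSubUnitCounit : H →ₗ[k] H :=
  (LinearMap.id : H →ₗ[k] H) - (Algebra.linearMap k H) ∘ₗ (Coalgebra.counit : H →ₗ[k] k)

end Defs

/-! ### Auxiliary material -/

section Aux

/-- all splittings of a list into two complementary subsequences -/
def spAux {H : Type*} : List H → List (List H × List H)
  | [] => [([], [])]
  | y :: l => ((spAux l).map fun p => (y :: p.1, p.2)) ++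
      ((spAux l).map fun p => (p.1, y :: p.2))

lemma spAux_mem {H : Type*} {l : List H} {p : List H × List H} (hp : p ∈ spAux l) :
    (∀ y ∈ p.1, y ∈ l) ∧ (∀ y ∈ p.2, y ∈ l) ∧ p.1.length + p.2.length = l.length := by
  induction l generalizing p with
  | nil =>
    simp only [spAux, List.mem_singleton] at hp
    subst hp
    simp
  | cons y l ih =>
    simp only [spAux, List.mem_append, List.mem_map] at hp
    rcases hp with ⟨q, hq, rfl⟩ | ⟨q, hq, rfl⟩ <;>
        obtain ⟨h1, h2, h3⟩ := ih hq <;>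
      refine ⟨fun z hz => ?_, fun z hz => ?_, by simp; omega⟩ <;>
        simp only [List.mem_cons] at hz ⊢ <;>
      tauto

variable (k : Type*) {H : Type*} [Field k] [Ring H] [Bialgebra k H]

lemma list_sum_map_add {M α : Type*} [AddCommMonoid M] (L : List α) (f g : α → M) :
    (L.map fun a => f a + g a).sum = (L.map f).sum + (L.map g).sum := by
  induction L with
  | nil => simp
  | cons a L ih => simp [ih, add_add_add_comm]

lemma comul_prod (l : List H) (hl : ∀ y ∈ l, IsPrim k H y) :
    Coalgebra.comul (R := k) l.prod
      = ((spAux l).map fun p => p.1.prod ⊗ₜ[k] p.2.prod).sum := by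
  induction l with
  | nil =>
    simp [spAux, Algebra.TensorProduct.one_def]
  | cons y l ih =>
    have hy : IsPrim k H y := hl y List.mem_cons_self
    have ih' := ih fun z hz => hl z (List.mem_cons_of_mem _ hz)
    rw [List.prod_cons, Bialgebra.comul_mul, ih', hy]
    rw [show ((y ⊗ₜ[k] (1 : H) + (1 : H) ⊗ₜ[k] y) *
        (((spAux l).map fun p => p.1.prod ⊗ₜ[k] p.2.prod).sum) : H ⊗[k] H)
      = (AddMonoidHom.mulLeft (y ⊗ₜ[k] (1 : H) + (1 : H) ⊗ₜ[k] y))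
          (((spAux l).map fun p => p.1.prod ⊗ₜ[k] p.2.prod).sum) from rfl,
      map_list_sum, List.map_map]
    have hfun : (⇑(AddMonoidHom.mulLeft (y ⊗ₜ[k] (1 : H) + (1 : H) ⊗ₜ[k] y)) ∘
        fun p : List H × List H => p.1.prod ⊗ₜ[k] p.2.prod)
        = fun p : List H × List H =>
            ((y :: p.1).prod ⊗ₜ[k] p.2.prod) + (p.1.prod ⊗ₜ[k] (y :: p.2).prod) := by
      funext p
      simp [AddMonoidHom.mulLeft, add_mul, Algebra.TensorProduct.tmul_mul_tmul,
        List.prod_cons]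
    rw [hfun, list_sum_map_add]
    simp only [spAux, List.map_append, List.sum_append, List.map_map]
    rfl

end Aux

lemma itCop_succ (k H : Type*) [Field k] [Ring H] [Bialgebra k H] (n : ℕ) :
    itCop k H (n + 1) =
      TensorProduct.map (LinearMap.id : H →ₗ[k] H) (itCop k H n) ∘ₗ
        (Coalgebra.comul : H →ₗ[k] H ⊗[k] H) := by
  induction n with
  | zero =>
    show (Coalgebra.comul : H →ₗ[k] H ⊗[k] H) ∘ₗ LinearMap.id = _
    rw [show itCop k H 0 = (LinearMap.id : H →ₗ[k] H) from rfl]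
    erw [TensorProduct.map_id]
    simp
    exact (LinearMap.id_comp _).symm
  | succ n ih =>
    apply LinearMap.ext
    intro x
    show copFirst k H (n + 1) (itCop k H (n + 1) x) = _
    rw [ih]
    show (TensorProduct.assoc k H H (Tp k H n)).toLinearMap
        (TensorProduct.map (Coalgebra.comul : H →ₗ[k] H ⊗[k] H) LinearMap.id
          (TensorProduct.map LinearMap.id (itCop k H n)
            ((Coalgebra.comul : H →ₗ[k] H ⊗[k] H) x))) = _
    have e1 : ∀ w : H ⊗[k] H,
        TensorProduct.map (Coalgebra.comul : H →ₗ[k] H ⊗[k] H) LinearMap.id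
            (TensorProduct.map LinearMap.id (itCop k H n) w)
          = TensorProduct.map (TensorProduct.map (LinearMap.id : H →ₗ[k] H) LinearMap.id)
              (itCop k H n)
              (TensorProduct.map (Coalgebra.comul : H →ₗ[k] H ⊗[k] H) LinearMap.id w) := by
      intro w
      rw [← LinearMap.comp_apply, ← TensorProduct.map_comp,
        ← LinearMap.comp_apply, ← TensorProduct.map_comp]
      simp
    rw [e1, LinearEquiv.coe_coe, ← TensorProduct.map_map_assoc]
    have e2 : (TensorProduct.assoc k H H (ModuleCat.of k H : Type _))
        (TensorProduct.map (Coalgebra.comul : H →ₗ[k] H ⊗[k] H) LinearMap.id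
          ((Coalgebra.comul : H →ₗ[k] H ⊗[k] H) x))
        = TensorProduct.map (LinearMap.id : H →ₗ[k] H)
            (Coalgebra.comul : H →ₗ[k] H ⊗[k] H)
            ((Coalgebra.comul : H →ₗ[k] H ⊗[k] H) x) :=
      Coalgebra.coassoc_apply x
    rw [e2]
    have e3 : (TensorProduct.map (LinearMap.id : H →ₗ[k] H)
          (TensorProduct.map LinearMap.id (itCop k H n))) ∘ₗ
          TensorProduct.map (LinearMap.id : H →ₗ[k] H)
            (Coalgebra.comul : H →ₗ[k] H ⊗[k] H)
        = TensorProduct.map (LinearMap.id : H →ₗ[k] H)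
            (TensorProduct.map LinearMap.id (itCop k H n) ∘ₗ
              (Coalgebra.comul : H →ₗ[k] H ⊗[k] H)) := by
      rw [← TensorProduct.map_comp, LinearMap.id_comp]
    show ((TensorProduct.map (LinearMap.id : H →ₗ[k] H)
          (TensorProduct.map LinearMap.id (itCop k H n))) ∘ₗ
          TensorProduct.map (LinearMap.id : H →ₗ[k] H)
            (Coalgebra.comul : H →ₗ[k] H ⊗[k] H)) (Coalgebra.comul (R := k) x) = _
    rw [e3]
    rfl

lemma pi_one (k H : Type*) [Field k] [Ring H] [Bialgebra k H] :
    idSubUnitCounit k H (1 : H) = 0 := by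
  simp [idSubUnitCounit]

/-- Let `H` be a bialgebra over a field. If `x ∈ H` is a product of `n`
primitive elements, then for every `m > n` (here `m = n' + 1 ≥ 1`, so `H^{⊗m} = Tp (m-1)`),
`((id_H − η∘ε)^{⊗m} ∘ Δ^{(m)})(x) = 0`. -/
theorem product_of_primitives_vanishing
    {k H : Type*} [Field k] [Ring H] [Bialgebra k H]
    (l : List H) (hl : ∀ y ∈ l, IsPrim k H y) (x : H) (hx : x = l.prod)
    (n : ℕ) (hn : l.length < n + 1) :
    itMap k H (idSubUnitCounit k H) n (itCop k H n x) = 0 := by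
  subst hx
  induction n generalizing l with
  | zero =>
    have hl0 : l = [] := List.length_eq_zero_iff.mp (by omega)
    subst hl0
    show idSubUnitCounit k H (LinearMap.id (1 : H)) = 0
    simpa using pi_one k H
  | succ n ih =>
    rw [itCop_succ]
    show TensorProduct.map (idSubUnitCounit k H) (itMap k H (idSubUnitCounit k H) n)
        (TensorProduct.map LinearMap.id (itCop k H n) (Coalgebra.comul l.prod)) = 0
    rw [comul_prod k l hl, map_list_sum, map_list_sum, List.map_map, List.map_map]
    apply List.sum_eq_zero
    intro t ht
    simp only [List.mem_map, Function.comp_apply] at ht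
    obtain ⟨p, hp, rfl⟩ := ht
    obtain ⟨hp1, hp2, hp3⟩ := spAux_mem hp
    rw [TensorProduct.map_tmul, TensorProduct.map_tmul, LinearMap.id_coe, id_eq]
    by_cases hlen : p.2.length < n + 1
    · rw [ih p.2 (fun y hy => hl y (hp2 y hy)) hlen, TensorProduct.tmul_zero]
    · have h1 : p.1 = [] := List.length_eq_zero_iff.mp (by omega)
      rw [h1, List.prod_nil, pi_one, TensorProduct.zero_tmul]
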